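/- Let ρ ∈ (0,1) and j ≥ 0 an integer. Then ∑_{n=0}^∞ (1−ρ)ρ^n ∑_{m=0}^{2j+n} p(2j+n−m, n, m)/((m+1)(1+ρ)) = ∑_{n=0}^∞ (1−ρ)ρ^n ∑_{m=max(n−2j,0)}^∞ p(2j+m−n, n, m)/((m+1)(1+ρ)), all series converging. In words: for a tagged customer entering the stationary M/M/1-PS queue, the number α of arrivals during its sojourn and the number δ of departures during its sojourn are equal in distribution. -/

import Mathlib

open MeasureTheory Filter Topology

/-- Pollaczek polynomials with parameters a = 1, b = 0. -/
noncomputable def pol : ℕ → ℝ → ℝ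
  | 0, _ => 1
  | 1, x => 2 * x
  | (n+2), x => (2 * ((n:ℝ) + 2) * x * pol (n+1) x - ((n:ℝ) + 1) * pol n x) / ((n:ℝ) + 2)

/-- Rescaled polynomials `Q_n(x) = ρ^{-n/2} P_n((1+ρ)x/(2√ρ))`. -/
noncomputable def Q (ρ : ℝ) (n : ℕ) (x : ℝ) : ℝ :=
  pol n ((1 + ρ) * x / (2 * Real.sqrt ρ)) / (Real.sqrt ρ) ^ n

/-- `x_ρ(θ) = (2√ρ/(1+ρ)) cos θ`. -/
noncomputable def X (ρ θ : ℝ) : ℝ := (2 * Real.sqrt ρ / (1 + ρ)) * Real.cos θ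

/-- Density of the spectral measure in the variable θ. -/
noncomputable def W (θ : ℝ) : ℝ :=
  (Real.sin θ / Real.cosh (Real.pi * (Real.cos θ / Real.sin θ) / 2)) *
    Real.exp ((θ - Real.pi / 2) * (Real.cos θ / Real.sin θ))

/-- `G_ρ(θ) = 𝒫(θ, √ρ) = ∑ ρ^m Q_m(x_ρ(θ))`. -/
noncomputable def G (ρ θ : ℝ) : ℝ :=
  (1 - 2 * Real.sqrt ρ * Real.cos θ + ρ) ^ (-(1:ℝ)/2) *
    Real.exp ((Real.cos θ / Real.sin θ) *
      Real.arctan (Real.sqrt ρ * Real.sin θ / (1 - Real.sqrt ρ * Real.cos θ)))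

/-- Powers of the sub-stochastic tridiagonal matrix `A` of the absorbed M/M/1-PS chain. -/
noncomputable def ker (ρ : ℝ) : ℕ → ℕ → ℕ → ℝ
  | 0, n, m => if n = m then 1 else 0
  | (k+1), 0, m => (ρ / (1 + ρ)) * ker ρ k 1 m
  | (k+1), (n+1), m => (ρ / (1 + ρ)) * ker ρ k (n+2) m +
      (((n:ℝ) + 1) / (((n:ℝ) + 2) * (1 + ρ))) * ker ρ k n m

section Aux
variable {ρ : ℝ}

lemma ker_nonneg (hρ : 0 < ρ) : ∀ k n m, 0 ≤ _root_.ker ρ k n m := by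
  intro k
  induction k with
  | zero => intro n m; unfold _root_.ker; split <;> norm_num
  | succ k ih =>
    have hc : (0:ℝ) < 1 + ρ := by linarith
    intro n m
    match n with
    | 0 =>
      show 0 ≤ (ρ / (1 + ρ)) * _root_.ker ρ k 1 m
      have := ih 1 m
      positivity
    | (n+1) =>
      show 0 ≤ (ρ / (1 + ρ)) * _root_.ker ρ k (n+2) m +
        (((n:ℝ) + 1) / (((n:ℝ) + 2) * (1 + ρ))) * _root_.ker ρ k n m
      have h1 := ih (n+2) m
      have h2 := ih n m
      positivity

lemma ker_le_one (hρ : 0 < ρ) : ∀ k n m, _root_.ker ρ k n m ≤ 1 := by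
  intro k
  induction k with
  | zero => intro n m; unfold _root_.ker; split <;> norm_num
  | succ k ih =>
    have hc : (0:ℝ) < 1 + ρ := by linarith
    intro n m
    match n with
    | 0 =>
      show (ρ / (1 + ρ)) * _root_.ker ρ k 1 m ≤ 1
      have h1 := ih 1 m
      have h0 := ker_nonneg hρ k 1 m
      have hd : ρ / (1+ρ) ≤ 1 := by
        rw [div_le_one hc]; linarith
      nlinarith [div_nonneg hρ.le hc.le]
    | (n+1) =>
      show (ρ / (1 + ρ)) * _root_.ker ρ k (n+2) m +
        (((n:ℝ) + 1) / (((n:ℝ) + 2) * (1 + ρ))) * _root_.ker ρ k n m ≤ 1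
      have h1 := ih (n+2) m
      have h2 := ih n m
      have h01 := ker_nonneg hρ k (n+2) m
      have h02 := ker_nonneg hρ k n m
      have hn2 : (0:ℝ) < (n:ℝ) + 2 := by positivity
      have hq : (0:ℝ) ≤ ((n:ℝ) + 1) / (((n:ℝ) + 2) * (1 + ρ)) := by positivity
      have hp : (0:ℝ) ≤ ρ / (1+ρ) := by positivity
      have key : ρ / (1 + ρ) + ((n:ℝ) + 1) / (((n:ℝ) + 2) * (1 + ρ)) ≤ 1 := by
        rw [div_add_div _ _ (ne_of_gt hc) (by positivity), div_le_one (by positivity)]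
        nlinarith
      nlinarith

lemma kerD0 (hc : (1:ℝ) + ρ ≠ 0) (k m : ℕ) :
    _root_.ker ρ (k+1) 0 m * (1 + ρ) = ρ * _root_.ker ρ k 1 m := by
  show (ρ / (1 + ρ)) * _root_.ker ρ k 1 m * (1+ρ) = _
  field_simp

lemma kerD1 (hc : (1:ℝ) + ρ ≠ 0) (k n m : ℕ) :
    _root_.ker ρ (k+1) (n+1) m * ((1 + ρ) * ((n:ℝ)+2)) =
      ρ * ((n:ℝ)+2) * _root_.ker ρ k (n+2) m + ((n:ℝ)+1) * _root_.ker ρ k n m := by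
  show ((ρ / (1 + ρ)) * _root_.ker ρ k (n+2) m +
      (((n:ℝ) + 1) / (((n:ℝ) + 2) * (1 + ρ))) * _root_.ker ρ k n m) * ((1 + ρ) * ((n:ℝ)+2)) = _
  have hn2 : ((n:ℝ)+2) ≠ 0 := by positivity
  field_simp

lemma kerT (hc : (1:ℝ) + ρ ≠ 0) : ∀ k n m,
    _root_.ker ρ (k+1) n 0 * (2*(1+ρ)) = _root_.ker ρ k n 1 ∧
    _root_.ker ρ (k+1) n (m+1) * ((1+ρ) * ((m:ℝ)+3)) =
      ρ * ((m:ℝ)+3) * _root_.ker ρ k n m + ((m:ℝ)+2) * _root_.ker ρ k n (m+2) := by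
  intro k
  induction k with
  | zero =>
    intro n m
    constructor
    · rcases n with _ | n
      · show (ρ / (1 + ρ)) * _root_.ker ρ 0 1 0 * (2*(1+ρ)) = _root_.ker ρ 0 0 1
        simp [_root_.ker]
      · show ((ρ / (1 + ρ)) * _root_.ker ρ 0 (n+2) 0 +
            (((n:ℝ) + 1) / (((n:ℝ) + 2) * (1 + ρ))) * _root_.ker ρ 0 n 0) * (2*(1+ρ)) = _root_.ker ρ 0 (n+1) 1
        have hn2 : ((n:ℝ)+2) ≠ 0 := by positivity
        simp only [_root_.ker]
        split_ifs <;> first | omega | (subst_vars; first | contradiction | (push_cast; field_simp; try ring))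
    · rcases n with _ | n
      · show (ρ / (1 + ρ)) * _root_.ker ρ 0 1 (m+1) * ((1+ρ) * ((m:ℝ)+3)) =
          ρ * ((m:ℝ)+3) * _root_.ker ρ 0 0 m + ((m:ℝ)+2) * _root_.ker ρ 0 0 (m+2)
        simp only [_root_.ker]
        split_ifs <;> first | omega | (subst_vars; first | contradiction | (push_cast; field_simp; try ring))
      · show ((ρ / (1 + ρ)) * _root_.ker ρ 0 (n+2) (m+1) +
            (((n:ℝ) + 1) / (((n:ℝ) + 2) * (1 + ρ))) * _root_.ker ρ 0 n (m+1)) * ((1+ρ) * ((m:ℝ)+3)) =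
          ρ * ((m:ℝ)+3) * _root_.ker ρ 0 (n+1) m + ((m:ℝ)+2) * _root_.ker ρ 0 (n+1) (m+2)
        have hn2 : ((n:ℝ)+2) ≠ 0 := by positivity
        simp only [_root_.ker]
        split_ifs <;> first | omega | (subst_vars; first | contradiction | (push_cast; field_simp; try ring))
  | succ k ih =>
    have hmul : ∀ n : ℕ, ((1:ℝ)+ρ) * ((n:ℝ)+2) ≠ 0 := by
      intro n; have : ((n:ℝ)+2) ≠ 0 := by positivity
      exact mul_ne_zero hc this
    intro n m
    constructor
    · rcases n with _ | n
      · apply mul_left_cancel₀ hc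
        have hD := kerD0 hc (k+1) 0
        have hD2 := kerD0 hc k 1
        have hI := (ih 1 0).1
        linear_combination 2*(1+ρ) * hD + ρ * hI - hD2
      · apply mul_left_cancel₀ (hmul n)
        have hD := kerD1 hc (k+1) n 0
        have hI1 := (ih (n+2) 0).1
        have hI2 := (ih n 0).1
        have hE1 := kerD1 hc k n 1
        linear_combination (2*(1+ρ)) * hD + (ρ*((n:ℝ)+2)) * hI1 + ((n:ℝ)+1) * hI2 - hE1
    · rcases n with _ | n
      · apply mul_left_cancel₀ hc
        have hD := kerD0 hc (k+1) (m+1)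
        have hI := (ih 1 m).2
        have hDa := kerD0 hc k m
        have hDb := kerD0 hc k (m+2)
        linear_combination ((1+ρ)*((m:ℝ)+3)) * hD + ρ * hI - (ρ*((m:ℝ)+3)) * hDa - ((m:ℝ)+2) * hDb
      · apply mul_left_cancel₀ (hmul n)
        have hD := kerD1 hc (k+1) n (m+1)
        have hI1 := (ih (n+2) m).2
        have hI2 := (ih n m).2
        have hDa := kerD1 hc k n m
        have hDb := kerD1 hc k n (m+2)
        linear_combination ((1+ρ)*((m:ℝ)+3)) * hD + (ρ*((n:ℝ)+2)) * hI1 + ((n:ℝ)+1) * hI2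
          - (ρ*((m:ℝ)+3)) * hDa - ((m:ℝ)+2) * hDb

lemma ker_db (hc : (1:ℝ) + ρ ≠ 0) : ∀ k (n m : ℕ),
    ((n:ℝ)+1) * ρ^n * _root_.ker ρ k n m = ((m:ℝ)+1) * ρ^m * _root_.ker ρ k m n := by
  intro k
  induction k with
  | zero =>
    intro n m
    rcases eq_or_ne n m with h | h
    · subst h; rfl
    · simp [_root_.ker, h, Ne.symm h]
  | succ k ih =>
    intro n m
    rcases n with _ | n
    · apply mul_left_cancel₀ (mul_ne_zero (two_ne_zero (α := ℝ)) hc)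
      have hD := kerD0 hc k m
      have hT := (kerT hc k m 0).1
      have ihh := ih 1 m
      push_cast at ihh ⊢
      linear_combination 2 * hD + ihh - ((m:ℝ)+1)*ρ^m * hT
    · have hA : ((1:ℝ)+ρ) * ((n:ℝ)+3) ≠ 0 :=
        mul_ne_zero hc (by positivity)
      apply mul_left_cancel₀ hA
      have hD := kerD1 hc k n m
      have hT := (kerT hc k m n).2
      have ih1 := ih (n+2) m
      have ih2 := ih n m
      push_cast at ih1 ih2 ⊢
      linear_combination (((n:ℝ)+3)*ρ^(n+1)) * hD - (((m:ℝ)+1)*ρ^m) * hT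
        + ((n:ℝ)+2) * ih1 + (((n:ℝ)+3)*ρ) * ih2

end Aux


noncomputable def ttt (ρ : ℝ) (j n m : ℕ) : ℝ :=
  if n ≤ 2*j + m then _root_.ker ρ (2*j + m - n) n m / (((m:ℝ) + 1) * (1 + ρ)) else 0

noncomputable def uuu (ρ : ℝ) (j n m : ℕ) : ℝ :=
  if m ≤ 2*j + n then _root_.ker ρ (2*j + n - m) n m / (((m:ℝ) + 1) * (1 + ρ)) else 0

section Aux2
variable {ρ : ℝ}

lemma uu_eq (hc : (1:ℝ) + ρ ≠ 0) (j n m : ℕ) :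
    (1-ρ) * ρ^n * uuu ρ j n m = (1-ρ) * ρ^m * ttt ρ j m n := by
  unfold uuu ttt
  by_cases h : m ≤ 2*j + n
  · rw [if_pos h, if_pos h]
    have db := ker_db hc (2*j+n-m) n m
    have hm1 : ((m:ℝ)+1) ≠ 0 := by positivity
    have hn1 : ((n:ℝ)+1) ≠ 0 := by positivity
    have e1 : _root_.ker ρ (2*j+n-m) n m / (((m:ℝ)+1)*(1+ρ)) * (((m:ℝ)+1)*(1+ρ))
        = _root_.ker ρ (2*j+n-m) n m := div_mul_cancel₀ _ (mul_ne_zero hm1 hc)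
    have e2 : _root_.ker ρ (2*j+n-m) m n / (((n:ℝ)+1)*(1+ρ)) * (((n:ℝ)+1)*(1+ρ))
        = _root_.ker ρ (2*j+n-m) m n := div_mul_cancel₀ _ (mul_ne_zero hn1 hc)
    apply mul_left_cancel₀ (mul_ne_zero (mul_ne_zero hn1 hm1) hc)
    linear_combination ((1-ρ)*ρ^n*((n:ℝ)+1)) * e1 - ((1-ρ)*ρ^m*((m:ℝ)+1)) * e2 + (1-ρ) * db
  · rw [if_neg h, if_neg h]; ring

lemma tt_nonneg (hρ0 : 0 < ρ) (j n m : ℕ) : 0 ≤ ttt ρ j n m := by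
  unfold ttt
  split
  · have h0 := ker_nonneg hρ0 (2*j+m-n) n m
    have hc : (0:ℝ) < 1 + ρ := by linarith
    positivity
  · exact le_refl 0

lemma uu_nonneg (hρ0 : 0 < ρ) (j n m : ℕ) : 0 ≤ uuu ρ j n m := by
  unfold uuu
  split
  · have h0 := ker_nonneg hρ0 (2*j+n-m) n m
    have hc : (0:ℝ) < 1 + ρ := by linarith
    positivity
  · exact le_refl 0

lemma tt_le (hρ0 : 0 < ρ) (j n m : ℕ) : ttt ρ j n m ≤ 1/(1+ρ) := by
  have hc : (0:ℝ) < 1 + ρ := by linarith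
  unfold ttt
  split
  · apply div_le_div₀ zero_le_one (ker_le_one hρ0 _ _ _) hc
    nlinarith [Nat.cast_nonneg (α := ℝ) m]
  · positivity

lemma uu_le (hρ0 : 0 < ρ) (j n m : ℕ) : uuu ρ j n m ≤ 1/(1+ρ) := by
  have hc : (0:ℝ) < 1 + ρ := by linarith
  unfold uuu
  split
  · apply div_le_div₀ zero_le_one (ker_le_one hρ0 _ _ _) hc
    nlinarith [Nat.cast_nonneg (α := ℝ) m]
  · positivity

lemma FF_bound (hρ0 : 0 < ρ) (hρ1 : ρ < 1) (j n m : ℕ) :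
    (1-ρ) * ρ^n * ttt ρ j n m ≤
      ((1-ρ)/(1+ρ)) * (Real.sqrt ρ ^ n * Real.sqrt ρ ^ m) := by
  have hc : (0:ℝ) < 1 + ρ := by linarith
  have hcne : (1:ℝ) + ρ ≠ 0 := hc.ne'
  have hs0 : 0 ≤ Real.sqrt ρ := Real.sqrt_nonneg ρ
  have hss : Real.sqrt ρ * Real.sqrt ρ = ρ := Real.mul_self_sqrt hρ0.le
  have hs1 : Real.sqrt ρ ≤ 1 := by nlinarith
  have h1ρ : (0:ℝ) ≤ 1 - ρ := by linarith
  rcases le_total n m with hnm | hnm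
  · -- use the swapped bound: (1-ρ)ρ^n tt n m = (1-ρ)ρ^m uu m n ≤ (1-ρ)ρ^m/(1+ρ)
    rw [← uu_eq hcne j m n]
    calc (1-ρ) * ρ^m * uuu ρ j m n ≤ (1-ρ) * ρ^m * (1/(1+ρ)) := by
          apply mul_le_mul_of_nonneg_left (uu_le hρ0 j m n) (by positivity)
      _ = ((1-ρ)/(1+ρ)) * (Real.sqrt ρ ^ m * Real.sqrt ρ ^ m) := by
          rw [show ρ^m = Real.sqrt ρ^m * Real.sqrt ρ^m by rw [← mul_pow, hss]]; ring
      _ ≤ ((1-ρ)/(1+ρ)) * (Real.sqrt ρ ^ n * Real.sqrt ρ ^ m) := by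
          apply mul_le_mul_of_nonneg_left _ (by positivity)
          apply mul_le_mul_of_nonneg_right (pow_le_pow_of_le_one hs0 hs1 hnm) (by positivity)
  · calc (1-ρ) * ρ^n * ttt ρ j n m ≤ (1-ρ) * ρ^n * (1/(1+ρ)) := by
          apply mul_le_mul_of_nonneg_left (tt_le hρ0 j n m) (by positivity)
      _ = ((1-ρ)/(1+ρ)) * (Real.sqrt ρ ^ n * Real.sqrt ρ ^ n) := by
          rw [show ρ^n = Real.sqrt ρ^n * Real.sqrt ρ^n by rw [← mul_pow, hss]]; ring
      _ ≤ ((1-ρ)/(1+ρ)) * (Real.sqrt ρ ^ n * Real.sqrt ρ ^ m) := by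
          apply mul_le_mul_of_nonneg_left _ (by positivity)
          apply mul_le_mul_of_nonneg_left (pow_le_pow_of_le_one hs0 hs1 hnm) (by positivity)

end Aux2

/-- In the stationary regime, the numbers α of arrivals and δ of departures during
the tagged sojourn are equal in distribution. -/
theorem stmt12 (ρ : ℝ) (hρ : ρ ∈ Set.Ioo (0:ℝ) 1) (j : ℕ) :
    (∀ n : ℕ, Summable (fun m : ℕ =>
      if n ≤ 2*j + m then ker ρ (2*j + m - n) n m / (((m:ℝ) + 1) * (1 + ρ)) else 0)) ∧
    Summable (fun n : ℕ => (1 - ρ) * ρ ^ n *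
      ∑ m ∈ Finset.range (2*j + n + 1), ker ρ (2*j + n - m) n m / (((m:ℝ) + 1) * (1 + ρ))) ∧
    Summable (fun n : ℕ => (1 - ρ) * ρ ^ n * ∑' m : ℕ,
      if n ≤ 2*j + m then ker ρ (2*j + m - n) n m / (((m:ℝ) + 1) * (1 + ρ)) else 0) ∧
    ∑' n : ℕ, (1 - ρ) * ρ ^ n *
        ∑ m ∈ Finset.range (2*j + n + 1), ker ρ (2*j + n - m) n m / (((m:ℝ) + 1) * (1 + ρ)) =
      ∑' n : ℕ, (1 - ρ) * ρ ^ n * ∑' m : ℕ,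
        if n ≤ 2*j + m then ker ρ (2*j + m - n) n m / (((m:ℝ) + 1) * (1 + ρ)) else 0 := by
  obtain ⟨hρ0, hρ1⟩ := hρ
  have hc : (0:ℝ) < 1 + ρ := by linarith
  have hcne : (1:ℝ) + ρ ≠ 0 := hc.ne'
  have hs0 : 0 ≤ Real.sqrt ρ := Real.sqrt_nonneg ρ
  have hss : Real.sqrt ρ * Real.sqrt ρ = ρ := Real.mul_self_sqrt hρ0.le
  have hs1 : Real.sqrt ρ < 1 := by nlinarith
  -- the two double-indexed families
  set F : ℕ × ℕ → ℝ := fun p => (1-ρ) * ρ^p.1 * ttt ρ j p.1 p.2 with hFdef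
  set Gf : ℕ × ℕ → ℝ := fun p => (1-ρ) * ρ^p.1 * uuu ρ j p.1 p.2 with hGdef
  have hFnn : ∀ p, 0 ≤ F p := fun p => by
    have := tt_nonneg hρ0 j p.1 p.2
    have h1ρ : (0:ℝ) ≤ 1 - ρ := by linarith
    positivity
  have hswap : ∀ p : ℕ × ℕ, Gf p = F p.swap := fun p => uu_eq hcne j p.1 p.2
  have hGnn : ∀ p, 0 ≤ Gf p := fun p => (hswap p) ▸ hFnn p.swap
  -- majorant
  have hmaj : Summable (fun p : ℕ × ℕ =>
      ((1-ρ)/(1+ρ)) * Real.sqrt ρ ^ p.1 * Real.sqrt ρ ^ p.2) := by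
    have h1 : Summable (fun n : ℕ => ((1-ρ)/(1+ρ)) * Real.sqrt ρ ^ n) :=
      (summable_geometric_of_lt_one hs0 hs1).mul_left _
    have h2 : Summable (fun n : ℕ => Real.sqrt ρ ^ n) :=
      summable_geometric_of_lt_one hs0 hs1
    have h1ρ : (0:ℝ) < 1 - ρ := by linarith
    exact h1.mul_of_nonneg h2 (fun n => by positivity) (fun n => by positivity)
  have hFsum : Summable F := by
    apply Summable.of_nonneg_of_le hFnn _ hmaj
    intro p
    have := FF_bound hρ0 hρ1 j p.1 p.2
    calc F p ≤ ((1-ρ)/(1+ρ)) * (Real.sqrt ρ ^ p.1 * Real.sqrt ρ ^ p.2) := this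
      _ = ((1-ρ)/(1+ρ)) * Real.sqrt ρ ^ p.1 * Real.sqrt ρ ^ p.2 := by ring
  have hGsum : Summable Gf :=
    (((Equiv.prodComm ℕ ℕ).summable_iff (f := F)).mpr hFsum).congr
      (fun p => (hswap p).symm)
  -- inner tsum of Gf equals the finite sum
  have hGfin : ∀ n : ℕ, ∑' m : ℕ, uuu ρ j n m =
      ∑ m ∈ Finset.range (2*j + n + 1), ker ρ (2*j + n - m) n m / (((m:ℝ) + 1) * (1 + ρ)) := by
    intro n
    rw [tsum_eq_sum (s := Finset.range (2*j + n + 1))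
      (by intro m hm; rw [Finset.mem_range] at hm; unfold uuu; rw [if_neg]; omega)]
    apply Finset.sum_congr rfl
    intro m hm
    rw [Finset.mem_range] at hm
    unfold uuu
    rw [if_pos (by omega)]
  -- claim 1
  refine ⟨?_, ?_, ?_, ?_⟩
  · intro n
    have h := hFsum.prod_factor n
    have hne : (1-ρ) * ρ^n ≠ 0 := mul_ne_zero (by linarith) (pow_ne_zero _ hρ0.ne')
    exact (summable_mul_left_iff hne).mp h
  · have h := ((summable_prod_of_nonneg hGnn).mp hGsum).2
    apply h.congr
    intro n
    rw [show (fun m => Gf (n, m)) = fun m => (1-ρ) * ρ^n * uuu ρ j n m from rfl,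
      tsum_mul_left, hGfin n]
  · have h := ((summable_prod_of_nonneg hFnn).mp hFsum).2
    apply h.congr
    intro n
    rw [show (fun m => F (n, m)) = fun m => (1-ρ) * ρ^n * ttt ρ j n m from rfl,
      tsum_mul_left]
    rfl
  · calc ∑' n : ℕ, (1 - ρ) * ρ ^ n *
        ∑ m ∈ Finset.range (2*j + n + 1), ker ρ (2*j + n - m) n m / (((m:ℝ) + 1) * (1 + ρ))
        = ∑' n : ℕ, ∑' m : ℕ, Gf (n, m) := by
          apply tsum_congr; intro n
          rw [show (fun m => Gf (n, m)) = fun m => (1-ρ) * ρ^n * uuu ρ j n m from rfl,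
            tsum_mul_left, hGfin n]
      _ = ∑' p : ℕ × ℕ, Gf p := (Summable.tsum_prod' hGsum hGsum.prod_factor).symm
      _ = ∑' p : ℕ × ℕ, F ((Equiv.prodComm ℕ ℕ) p) := tsum_congr (fun p => hswap p)
      _ = ∑' p : ℕ × ℕ, F p := (Equiv.prodComm ℕ ℕ).tsum_eq F
      _ = ∑' n : ℕ, ∑' m : ℕ, F (n, m) := Summable.tsum_prod' hFsum hFsum.prod_factor
      _ = _ := by
          apply tsum_congr; intro n
          rw [show (fun m => F (n, m)) = fun m => (1-ρ) * ρ^n * ttt ρ j n m from rfl,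
            tsum_mul_left]
          rfl
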